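/- (Proposition: characterization of incentive compatibility for submodular retentions.) Suppose the menu's retentions are submodular, i.e. r_θ(l) is nonincreasing in θ for every l ∈ [0,L̄]. Then the menu (r_θ, p_θ)_{θ∈Θ} is incentive compatible if and only if for every θ ∈ Θ the premium satisfies the premium formula (★): p_θ = p_{θ̲} + ∫₀^{L̄} (1 − g_{θ̲}(F_{θ̲}(l))) r_{θ̲}(l) dl − ∫_{θ̲}^{θ} ∫₀^{L̄} D(s,l) r_s(l) dl ds − ∫₀^{L̄} (1 − g_θ(F_θ(l))) r_θ(l) dl. -/

import Mathlib

open MeasureTheory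
open Set intervalIntegral

lemma aux_intable {a b M : ℝ} {f : ℝ → ℝ} (hab : a ≤ b)
    (hmeas : Measurable f) (hbd : ∀ x ∈ Set.Ioc a b, |f x| ≤ M) :
    IntervalIntegrable f volume a b := by
  rw [intervalIntegrable_iff_integrableOn_Ioc_of_le hab]
  exact Measure.integrableOn_of_bounded measure_Ioc_lt_top.ne hmeas.aestronglyMeasurable
    (ae_restrict_of_forall_mem measurableSet_Ioc (by simpa [Real.norm_eq_abs] using hbd))

lemma aux_deriv_bound {a b x d : ℝ} {C : NNReal} {f : ℝ → ℝ}
    (hab : a < b) (hx : x ∈ Set.Icc a b)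
    (hf : HasDerivWithinAt f d (Set.Icc a b) x)
    (hlip : LipschitzOnWith C f (Set.Icc a b)) : |d| ≤ C := by
  have hslope : Filter.Tendsto (slope f x) (nhdsWithin x (Set.Icc a b \ {x})) (nhds d) :=
    hasDerivWithinAt_iff_tendsto_slope.1 hf
  have habs : ∀ t ∈ Set.Icc a b \ {x}, |slope f x t| ≤ C := by
    intro t ht
    have hd := hlip.dist_le_mul t ht.1 x hx
    rw [Real.dist_eq, Real.dist_eq] at hd
    rw [slope_def_field, div_eq_mul_inv, abs_mul, abs_inv]
    rw [abs_sub_comm (f t), abs_sub_comm t] at hd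
    have hpos : (0:ℝ) < |t - x| := abs_pos.2 (sub_ne_zero.2 ht.2)
    rw [abs_sub_comm (f x), abs_sub_comm x] at hd
    calc |f t - f x| * |t - x|⁻¹ ≤ (C * |t - x|) * |t - x|⁻¹ := by
          apply mul_le_mul_of_nonneg_right hd (by positivity)
      _ = C := by
          rw [mul_assoc, mul_inv_cancel₀ hpos.ne', mul_one]
  rcases lt_or_ge x b with hxb | hbx
  · have hsub : Set.Ioc x b ⊆ Set.Icc a b \ {x} := fun t ht =>
      ⟨⟨le_trans hx.1 ht.1.le, ht.2⟩, ne_of_gt ht.1⟩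
    have h1 : Filter.Tendsto (slope f x) (nhdsWithin x (Set.Ioc x b)) (nhds d) :=
      hslope.mono_left (nhdsWithin_mono _ hsub)
    have hne : (nhdsWithin x (Set.Ioc x b)).NeBot := by
      rw [nhdsWithin_Ioc_eq_nhdsGT hxb]; infer_instance
    exact le_of_tendsto h1.abs
      (Filter.eventually_of_mem self_mem_nhdsWithin fun t ht => habs t (hsub ht))
  · have hax : a < x := lt_of_lt_of_le hab hbx
    have hsub : Set.Ico a x ⊆ Set.Icc a b \ {x} := fun t ht =>
      ⟨⟨ht.1, le_trans ht.2.le hx.2⟩, ne_of_lt ht.2⟩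
    have h1 : Filter.Tendsto (slope f x) (nhdsWithin x (Set.Ico a x)) (nhds d) :=
      hslope.mono_left (nhdsWithin_mono _ hsub)
    have hne : (nhdsWithin x (Set.Ico a x)).NeBot := by
      rw [nhdsWithin_Ico_eq_nhdsLT hax]; infer_instance
    exact le_of_tendsto h1.abs
      (Filter.eventually_of_mem self_mem_nhdsWithin fun t ht => habs t (hsub ht))

lemma aux_ftc {a b u v : ℝ} {f f' : ℝ → ℝ}
    (hu : u ∈ Set.Icc a b) (hv : v ∈ Set.Icc a b) (huv : u ≤ v)
    (hcont : ContinuousOn f (Set.Icc a b))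
    (hderiv : ∀ s ∈ Set.Icc a b, HasDerivWithinAt f (f' s) (Set.Icc a b) s)
    (hint : IntervalIntegrable f' volume u v) :
    ∫ s in u..v, f' s = f v - f u := by
  apply intervalIntegral.integral_eq_sub_of_hasDeriv_right_of_le huv
    (hcont.mono (Set.Icc_subset_Icc hu.1 hv.2)) _ hint
  intro x hx
  have hxI : x ∈ Set.Ioo a b := ⟨lt_of_le_of_lt hu.1 hx.1, lt_of_lt_of_le hx.2 hv.2⟩
  exact ((hderiv x (Set.Ioo_subset_Icc_self hxI)).hasDerivAt
    (Icc_mem_nhds hxI.1 hxI.2)).hasDerivWithinAt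

lemma aux_squeeze {x M : ℝ} (hM : 0 ≤ M) (h : ∀ n : ℕ, 0 < n → |x| ≤ M / n) : x = 0 := by
  by_contra hne
  have hpos : 0 < |x| := abs_pos.2 hne
  obtain ⟨n, hnn⟩ := exists_nat_gt (M / |x| + 1)
  have hn0 : 0 < n := by
    have h0 : (0:ℝ) ≤ M / |x| := div_nonneg hM hpos.le
    have h1 : (0:ℝ) < n := by linarith
    exact_mod_cast h1
  have hb := h n hn0
  have hnpos : (0:ℝ) < n := Nat.cast_pos.2 hn0
  rw [le_div_iff₀ hnpos] at hb
  have h2 : M / |x| < n := by linarith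
  rw [div_lt_iff₀ hpos] at h2
  nlinarith


/-- The agent's Yaari dual utility: `U_θ(r, p) = -p - ∫₀^{L̄} (1 - g_θ(F_θ(l))) r(l) dl`. -/
noncomputable def Uag (g F : ℝ → ℝ → ℝ) (Lbar θ : ℝ) (rr : ℝ → ℝ) (pp : ℝ) : ℝ :=
  -pp - ∫ l in (0 : ℝ)..Lbar, (1 - g θ (F θ l)) * rr l

/-- **Characterization of incentive compatibility for submodular retentions.** If the
retentions `r_θ(l)` are nonincreasing in `θ` for every `l`, then the menu is incentive
compatible iff every premium satisfies the envelope formula (★). -/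
theorem IC_iff_premium_formula_of_submodular
    (θlow θhigh Lbar : ℝ) (hθ : θlow < θhigh) (hL : 0 < Lbar)
    (g : ℝ → ℝ → ℝ) (F : ℝ → ℝ → ℝ)
    (hg_mono : ∀ θ ∈ Set.Icc θlow θhigh, MonotoneOn (g θ) (Set.Icc (0 : ℝ) 1))
    (hg0 : ∀ θ ∈ Set.Icc θlow θhigh, g θ 0 = 0)
    (hg1 : ∀ θ ∈ Set.Icc θlow θhigh, g θ 1 = 1)
    (hg_range : ∀ θ ∈ Set.Icc θlow θhigh, ∀ t ∈ Set.Icc (0 : ℝ) 1,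
      g θ t ∈ Set.Icc (0 : ℝ) 1)
    (hF_range : ∀ θ ∈ Set.Icc θlow θhigh, ∀ l ∈ Set.Icc (0 : ℝ) Lbar,
      F θ l ∈ Set.Icc (0 : ℝ) 1)
    (hgF_meas : Measurable fun x : ℝ × ℝ => g x.1 (F x.1 x.2))
    (r : ℝ → ℝ → ℝ) (p : ℝ → ℝ)
    (hr_meas : Measurable (Function.uncurry r)) (hp_meas : Measurable p)
    (hr_range : ∀ θ ∈ Set.Icc θlow θhigh, ∀ l ∈ Set.Icc (0 : ℝ) Lbar,
      r θ l ∈ Set.Icc (0 : ℝ) 1)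
    (D : ℝ → ℝ → ℝ)
    (hD : ∀ l ∈ Set.Icc (0 : ℝ) Lbar, ∀ s ∈ Set.Icc θlow θhigh,
      HasDerivWithinAt (fun t => g t (F t l)) (D s l) (Set.Icc θlow θhigh) s)
    (hLip : ∃ C : NNReal, ∀ l ∈ Set.Icc (0 : ℝ) Lbar,
      LipschitzOnWith C (fun s => g s (F s l)) (Set.Icc θlow θhigh))
    (hD_meas : Measurable (Function.uncurry D))
    (hD_nonpos : ∀ s ∈ Set.Icc θlow θhigh, ∀ l ∈ Set.Icc (0 : ℝ) Lbar, D s l ≤ 0)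
    -- submodularity: `r_θ(l)` is nonincreasing in `θ` for every `l`
    (hsub : ∀ l ∈ Set.Icc (0 : ℝ) Lbar, ∀ θ₁ ∈ Set.Icc θlow θhigh,
      ∀ θ₂ ∈ Set.Icc θlow θhigh, θ₁ ≤ θ₂ → r θ₂ l ≤ r θ₁ l) :
    (∀ θ ∈ Set.Icc θlow θhigh, ∀ θ' ∈ Set.Icc θlow θhigh,
        Uag g F Lbar θ (r θ') (p θ') ≤ Uag g F Lbar θ (r θ) (p θ)) ↔
      (∀ θ ∈ Set.Icc θlow θhigh,
        p θ = p θlow + (∫ l in (0 : ℝ)..Lbar, (1 - g θlow (F θlow l)) * r θlow l)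
          - (∫ s in θlow..θ, ∫ l in (0 : ℝ)..Lbar, D s l * r s l)
          - ∫ l in (0 : ℝ)..Lbar, (1 - g θ (F θ l)) * r θ l) := by
  obtain ⟨C, hC⟩ := hLip
  have hL' : (0:ℝ) ≤ Lbar := hL.le
  have hθl : θlow ∈ Set.Icc θlow θhigh := ⟨le_refl _, hθ.le⟩
  have hDb : ∀ s ∈ Set.Icc θlow θhigh, ∀ l ∈ Set.Icc (0:ℝ) Lbar, |D s l| ≤ C :=
    fun s hs l hl => aux_deriv_bound hθ hs (hD l hl s hs) (hC l hl)
  have hD_secl : ∀ l : ℝ, Measurable fun s => D s l :=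
    fun l => hD_meas.comp (measurable_id.prodMk measurable_const)
  have hr_sec : ∀ t : ℝ, Measurable fun l => r t l :=
    fun t => hr_meas.comp (measurable_const.prodMk measurable_id)
  have hGF_sec : ∀ t : ℝ, Measurable fun l => g t (F t l) :=
    fun t => hgF_meas.comp (measurable_const.prodMk measurable_id)
  have hGF_range : ∀ t ∈ Set.Icc θlow θhigh, ∀ l ∈ Set.Icc (0:ℝ) Lbar,
      g t (F t l) ∈ Set.Icc (0:ℝ) 1 := fun t ht l hl => hg_range t ht _ (hF_range t ht l hl)
  -- integrability of the J integrands
  have hint_J : ∀ t ∈ Set.Icc θlow θhigh, ∀ t' ∈ Set.Icc θlow θhigh,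
      IntervalIntegrable (fun l => (1 - g t (F t l)) * r t' l) volume 0 Lbar := by
    intro t ht t' ht'
    apply aux_intable hL' ((measurable_const.sub (hGF_sec t)).mul (hr_sec t')) (M := 1)
    intro l hl
    have hl' : l ∈ Set.Icc (0:ℝ) Lbar := Set.Ioc_subset_Icc_self hl
    have h1 := hGF_range t ht l hl'
    have h2 := hr_range t' ht' l hl'
    show |(1 - g t (F t l)) * r t' l| ≤ 1
    rw [abs_mul]
    calc |1 - g t (F t l)| * |r t' l| ≤ 1 * 1 := by
          apply mul_le_mul _ _ (abs_nonneg _) zero_le_one <;> rw [abs_le] <;>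
            exact ⟨by linarith [h1.1, h1.2, h2.1, h2.2], by linarith [h1.1, h1.2, h2.1, h2.2]⟩
      _ = 1 := mul_one 1
  have hint_r : ∀ t ∈ Set.Icc θlow θhigh, IntervalIntegrable (fun l => r t l) volume 0 Lbar := by
    intro t ht
    apply aux_intable hL' (hr_sec t) (M := 1)
    intro l hl
    have h2 := hr_range t ht l (Set.Ioc_subset_Icc_self hl)
    rw [abs_le]; exact ⟨by linarith [h2.1], h2.2⟩
  have hint_Dr : ∀ s ∈ Set.Icc θlow θhigh, ∀ t ∈ Set.Icc θlow θhigh,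
      IntervalIntegrable (fun l => D s l * r t l) volume 0 Lbar := by
    intro s hs t ht
    apply aux_intable hL' ((hD_meas.comp (measurable_const.prodMk measurable_id)).mul (hr_sec t)) (M := C)
    intro l hl
    have hl' : l ∈ Set.Icc (0:ℝ) Lbar := Set.Ioc_subset_Icc_self hl
    have h2 := hr_range t ht l hl'
    show |D s l * r t l| ≤ C
    rw [abs_mul]
    calc |D s l| * |r t l| ≤ C * 1 := by
          apply mul_le_mul (hDb s hs l hl') _ (abs_nonneg _) C.coe_nonneg
          rw [abs_le]; exact ⟨by linarith [h2.1], h2.2⟩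
      _ = C := mul_one _
  -- bound on inner integrals
  have hinner_bd : ∀ s ∈ Set.Icc θlow θhigh, ∀ t ∈ Set.Icc θlow θhigh,
      |∫ l in (0:ℝ)..Lbar, D s l * r t l| ≤ C * Lbar := by
    intro s hs t ht
    have := intervalIntegral.norm_integral_le_of_norm_le_const
      (C := C) (f := fun l => D s l * r t l) (a := (0:ℝ)) (b := Lbar) ?_
    · rw [Real.norm_eq_abs] at this
      simpa [abs_of_nonneg hL'] using this
    · intro x hx
      rw [Set.uIoc_of_le hL'] at hx
      have hx' : x ∈ Set.Icc (0:ℝ) Lbar := Set.Ioc_subset_Icc_self hx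
      have h2 := hr_range t ht x hx'
      rw [Real.norm_eq_abs, abs_mul]
      calc |D s x| * |r t x| ≤ C * 1 := by
            apply mul_le_mul (hDb s hs x hx') _ (abs_nonneg _) C.coe_nonneg
            rw [abs_le]; exact ⟨by linarith [h2.1], h2.2⟩
        _ = C := mul_one _
  -- measurability of the inner integrals as functions of s (fixed t and diagonal)
  have hmeas_inner : ∀ t : ℝ, StronglyMeasurable fun s => ∫ l in (0:ℝ)..Lbar, D s l * r t l := by
    intro t
    simp_rw [intervalIntegral.integral_of_le hL']
    have hsm : StronglyMeasurable (Function.uncurry fun s l => D s l * r t l) := by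
      apply Measurable.stronglyMeasurable
      exact hD_meas.mul (hr_meas.comp (measurable_const.prodMk measurable_snd))
    exact hsm.integral_prod_right
  have hmeas_diag : StronglyMeasurable fun s => ∫ l in (0:ℝ)..Lbar, D s l * r s l := by
    simp_rw [intervalIntegral.integral_of_le hL']
    have hsm : StronglyMeasurable (Function.uncurry fun s l => D s l * r s l) := by
      apply Measurable.stronglyMeasurable
      exact hD_meas.mul hr_meas
    exact hsm.integral_prod_right
  -- interval integrability of the outer functions
  have hsubΘ : ∀ u ∈ Set.Icc θlow θhigh, ∀ v ∈ Set.Icc θlow θhigh,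
      Set.Ioc u v ⊆ Set.Icc θlow θhigh := fun u hu v hv x hx =>
    ⟨le_trans hu.1 hx.1.le, le_trans hx.2 hv.2⟩
  have hint_outer : ∀ t ∈ Set.Icc θlow θhigh, ∀ u ∈ Set.Icc θlow θhigh,
      ∀ v ∈ Set.Icc θlow θhigh, u ≤ v →
      IntervalIntegrable (fun s => ∫ l in (0:ℝ)..Lbar, D s l * r t l) volume u v := by
    intro t ht u hu v hv huv
    exact aux_intable huv (hmeas_inner t).measurable
      (fun x hx => hinner_bd x (hsubΘ u hu v hv hx) t ht)
  have hint_h : ∀ u ∈ Set.Icc θlow θhigh, ∀ v ∈ Set.Icc θlow θhigh, u ≤ v →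
      IntervalIntegrable (fun s => ∫ l in (0:ℝ)..Lbar, D s l * r s l) volume u v := by
    intro u hu v hv huv
    exact aux_intable huv hmeas_diag.measurable
      (fun x hx => hinner_bd x (hsubΘ u hu v hv hx) x (hsubΘ u hu v hv hx))
  -- FTC in the type variable, for each fixed l
  have hftc : ∀ l ∈ Set.Icc (0:ℝ) Lbar, ∀ u ∈ Set.Icc θlow θhigh,
      ∀ v ∈ Set.Icc θlow θhigh, u ≤ v →
      ∫ s in u..v, D s l = g v (F v l) - g u (F u l) := by
    intro l hl u hu v hv huv
    exact aux_ftc hu hv huv (hC l hl).continuousOn (fun s hs => hD l hl s hs)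
      (aux_intable huv (hD_secl l) (fun x hx => hDb x (hsubΘ u hu v hv hx) l hl))
  -- the key identity (FTC + Fubini)
  have hkey : ∀ u ∈ Set.Icc θlow θhigh, ∀ v ∈ Set.Icc θlow θhigh, u ≤ v →
      ∀ t ∈ Set.Icc θlow θhigh,
      (∫ l in (0:ℝ)..Lbar, (1 - g u (F u l)) * r t l)
        - (∫ l in (0:ℝ)..Lbar, (1 - g v (F v l)) * r t l)
      = ∫ s in u..v, ∫ l in (0:ℝ)..Lbar, D s l * r t l := by
    intro u hu v hv huv t ht
    rw [← intervalIntegral.integral_sub (hint_J u hu t ht) (hint_J v hv t ht)]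
    have step1 : (∫ l in (0:ℝ)..Lbar, ((1 - g u (F u l)) * r t l - (1 - g v (F v l)) * r t l))
        = ∫ l in (0:ℝ)..Lbar, (∫ s in u..v, D s l) * r t l := by
      apply intervalIntegral.integral_congr
      intro l hl
      rw [Set.uIcc_of_le hL'] at hl
      show (1 - g u (F u l)) * r t l - (1 - g v (F v l)) * r t l
        = (∫ s in u..v, D s l) * r t l
      rw [hftc l hl u hu v hv huv]; ring
    rw [step1]
    simp_rw [intervalIntegral.integral_of_le hL', intervalIntegral.integral_of_le huv]
    have hinteg : Integrable (Function.uncurry fun l s => D s l * r t l)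
        ((volume.restrict (Set.Ioc (0:ℝ) Lbar)).prod (volume.restrict (Set.Ioc u v))) := by
      rw [Measure.prod_restrict]
      apply Measure.integrableOn_of_bounded (M := C)
      · rw [Measure.prod_prod]
        exact ENNReal.mul_ne_top measure_Ioc_lt_top.ne measure_Ioc_lt_top.ne
      · apply Measurable.aestronglyMeasurable
        exact (hD_meas.comp (measurable_snd.prodMk measurable_fst)).mul
          (hr_meas.comp (measurable_const.prodMk measurable_fst))
      · apply ae_restrict_of_forall_mem (measurableSet_Ioc.prod measurableSet_Ioc)
        rintro ⟨l, s⟩ ⟨hl, hs⟩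
        have hl' : l ∈ Set.Icc (0:ℝ) Lbar := Set.Ioc_subset_Icc_self hl
        have hs' : s ∈ Set.Icc θlow θhigh := hsubΘ u hu v hv hs
        have h2 := hr_range t ht l hl'
        show ‖D s l * r t l‖ ≤ (C:ℝ)
        rw [Real.norm_eq_abs, abs_mul]
        calc |D s l| * |r t l| ≤ C * 1 := by
              apply mul_le_mul (hDb s hs' l hl') _ (abs_nonneg _) C.coe_nonneg
              rw [abs_le]; exact ⟨by linarith [h2.1], h2.2⟩
          _ = C := mul_one _
    have hswap := MeasureTheory.integral_integral_swap hinteg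
    rw [← hswap]
    simp_rw [MeasureTheory.integral_mul_const]
  -- monotonicity of the inner integral in the retention index
  have hmono_inner : ∀ s ∈ Set.Icc θlow θhigh, ∀ a ∈ Set.Icc θlow θhigh,
      ∀ b ∈ Set.Icc θlow θhigh, a ≤ b →
      (∫ l in (0:ℝ)..Lbar, D s l * r a l) ≤ ∫ l in (0:ℝ)..Lbar, D s l * r b l := by
    intro s hs a ha b hb hab
    apply intervalIntegral.integral_mono_on hL' (hint_Dr s hs a ha) (hint_Dr s hs b hb)
    intro l hl
    exact mul_le_mul_of_nonpos_left (hsub l hl a ha b hb hab) (hD_nonpos s hs l hl)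
  -- sandwich for the diagonal integral
  have hW : ∀ u ∈ Set.Icc θlow θhigh, ∀ v ∈ Set.Icc θlow θhigh, u ≤ v →
      (∫ s in u..v, ∫ l in (0:ℝ)..Lbar, D s l * r u l)
        ≤ (∫ s in u..v, ∫ l in (0:ℝ)..Lbar, D s l * r s l)
      ∧ (∫ s in u..v, ∫ l in (0:ℝ)..Lbar, D s l * r s l)
        ≤ ∫ s in u..v, ∫ l in (0:ℝ)..Lbar, D s l * r v l := by
    intro u hu v hv huv
    have hIcc : ∀ s ∈ Set.Icc u v, s ∈ Set.Icc θlow θhigh := fun s hs =>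
      ⟨le_trans hu.1 hs.1, le_trans hs.2 hv.2⟩
    constructor
    · apply intervalIntegral.integral_mono_on huv (hint_outer u hu u hu v hv huv)
        (hint_h u hu v hv huv)
      intro s hs
      exact hmono_inner s (hIcc s hs) u hu s (hIcc s hs) hs.1
    · apply intervalIntegral.integral_mono_on huv (hint_h u hu v hv huv)
        (hint_outer v hv u hu v hv huv)
      intro s hs
      exact hmono_inner s (hIcc s hs) s (hIcc s hs) v hv hs.2
    -- bounds on ∫ r
  have hR_nonneg : ∀ t ∈ Set.Icc θlow θhigh, 0 ≤ ∫ l in (0:ℝ)..Lbar, r t l := by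
    intro t ht
    apply intervalIntegral.integral_nonneg hL'
    intro l hl; exact (hr_range t ht l hl).1
  have hR_le : ∀ t ∈ Set.Icc θlow θhigh, (∫ l in (0:ℝ)..Lbar, r t l) ≤ Lbar := by
    intro t ht
    calc (∫ l in (0:ℝ)..Lbar, r t l) ≤ ∫ _l in (0:ℝ)..Lbar, (1:ℝ) := by
          apply intervalIntegral.integral_mono_on hL' (hint_r t ht) intervalIntegrable_const
          intro l hl; exact (hr_range t ht l hl).2
      _ = Lbar := by simp
  -- quantitative bound on the width of the sandwich
  have hGbd : ∀ u ∈ Set.Icc θlow θhigh, ∀ v ∈ Set.Icc θlow θhigh, u ≤ v →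
      (∫ s in u..v, ∫ l in (0:ℝ)..Lbar, D s l * r v l)
        - (∫ s in u..v, ∫ l in (0:ℝ)..Lbar, D s l * r u l)
      ≤ (v - u) * ((C:ℝ) * ((∫ l in (0:ℝ)..Lbar, r u l) - (∫ l in (0:ℝ)..Lbar, r v l))) := by
    intro u hu v hv huv
    rw [← intervalIntegral.integral_sub (hint_outer v hv u hu v hv huv)
      (hint_outer u hu u hu v hv huv)]
    have hconst : (∫ _s in u..v, ((C:ℝ) * ((∫ l in (0:ℝ)..Lbar, r u l)
        - (∫ l in (0:ℝ)..Lbar, r v l))))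
        = (v - u) * ((C:ℝ) * ((∫ l in (0:ℝ)..Lbar, r u l) - (∫ l in (0:ℝ)..Lbar, r v l))) := by
      rw [intervalIntegral.integral_const, smul_eq_mul]
    rw [← hconst]
    apply intervalIntegral.integral_mono_on huv
      ((hint_outer v hv u hu v hv huv).sub (hint_outer u hu u hu v hv huv))
      intervalIntegrable_const
    intro s hs
    have hsT : s ∈ Set.Icc θlow θhigh := ⟨le_trans hu.1 hs.1, le_trans hs.2 hv.2⟩
    show (∫ l in (0:ℝ)..Lbar, D s l * r v l) - (∫ l in (0:ℝ)..Lbar, D s l * r u l)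
      ≤ (C:ℝ) * ((∫ l in (0:ℝ)..Lbar, r u l) - (∫ l in (0:ℝ)..Lbar, r v l))
    rw [← intervalIntegral.integral_sub (hint_Dr s hsT v hv) (hint_Dr s hsT u hu),
      ← intervalIntegral.integral_sub (hint_r u hu) (hint_r v hv),
      ← intervalIntegral.integral_const_mul]
    apply intervalIntegral.integral_mono_on hL'
      ((hint_Dr s hsT v hv).sub (hint_Dr s hsT u hu))
      (((hint_r u hu).sub (hint_r v hv)).const_mul _)
    intro l hl
    show D s l * r v l - D s l * r u l ≤ (C:ℝ) * (r u l - r v l)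
    have h1 : -D s l ≤ (C:ℝ) := by
      have := hDb s hsT l hl; rw [abs_le] at this; linarith [this.1]
    have h2 : (0:ℝ) ≤ r u l - r v l := sub_nonneg.2 (hsub l hl u hu v hv huv)
    calc D s l * r v l - D s l * r u l = (-D s l) * (r u l - r v l) := by ring
      _ ≤ (C:ℝ) * (r u l - r v l) := mul_le_mul_of_nonneg_right h1 h2
  constructor
  · -- IC implies the premium formula
    intro hIC θ hθm
    have hVsand : ∀ u ∈ Set.Icc θlow θhigh, ∀ v ∈ Set.Icc θlow θhigh, u ≤ v →
        (∫ s in u..v, ∫ l in (0:ℝ)..Lbar, D s l * r u l)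
          ≤ ((-(p v) - ∫ l in (0:ℝ)..Lbar, (1 - g v (F v l)) * r v l)
            - ((-(p u)) - ∫ l in (0:ℝ)..Lbar, (1 - g u (F u l)) * r u l))
        ∧ ((-(p v) - ∫ l in (0:ℝ)..Lbar, (1 - g v (F v l)) * r v l)
            - ((-(p u)) - ∫ l in (0:ℝ)..Lbar, (1 - g u (F u l)) * r u l))
          ≤ ∫ s in u..v, ∫ l in (0:ℝ)..Lbar, D s l * r v l := by
      intro u hu v hv huv
      have h1 := hIC v hv u hu
      have h2 := hIC u hu v hv
      simp only [Uag] at h1 h2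
      have k1 := hkey u hu v hv huv u hu
      have k2 := hkey u hu v hv huv v hv
      constructor <;> linarith
    have hstep : ∀ u ∈ Set.Icc θlow θhigh, ∀ v ∈ Set.Icc θlow θhigh, u ≤ v →
        |(((-(p v)) - ∫ l in (0:ℝ)..Lbar, (1 - g v (F v l)) * r v l)
            - (∫ s in θlow..v, ∫ l in (0:ℝ)..Lbar, D s l * r s l))
          - (((-(p u)) - ∫ l in (0:ℝ)..Lbar, (1 - g u (F u l)) * r u l)
            - (∫ s in θlow..u, ∫ l in (0:ℝ)..Lbar, D s l * r s l))|
        ≤ (v - u) * ((C:ℝ) * ((∫ l in (0:ℝ)..Lbar, r u l) - (∫ l in (0:ℝ)..Lbar, r v l))) := by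
      intro u hu v hv huv
      have hVs := hVsand u hu v hv huv
      have hWs := hW u hu v hv huv
      have hdiff : (∫ s in θlow..v, ∫ l in (0:ℝ)..Lbar, D s l * r s l)
          - (∫ s in θlow..u, ∫ l in (0:ℝ)..Lbar, D s l * r s l)
          = ∫ s in u..v, ∫ l in (0:ℝ)..Lbar, D s l * r s l :=
        intervalIntegral.integral_interval_sub_left (hint_h θlow hθl v hv hv.1)
          (hint_h θlow hθl u hu hu.1)
      have hG := hGbd u hu v hv huv
      rw [abs_le]
      constructor <;> linarith [hVs.1, hVs.2, hWs.1, hWs.2]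
    have hδ : (0:ℝ) ≤ θ - θlow := sub_nonneg.2 hθm.1
    have hmain : ∀ n : ℕ, 0 < n →
        |(((-(p θ)) - ∫ l in (0:ℝ)..Lbar, (1 - g θ (F θ l)) * r θ l)
            - (∫ s in θlow..θ, ∫ l in (0:ℝ)..Lbar, D s l * r s l))
          - (((-(p θlow)) - ∫ l in (0:ℝ)..Lbar, (1 - g θlow (F θlow l)) * r θlow l)
            - (∫ s in θlow..θlow, ∫ l in (0:ℝ)..Lbar, D s l * r s l))|
        ≤ ((θ - θlow) * ((C:ℝ) * Lbar)) / n := by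
      intro n hn
      have hn' : ((n:ℝ)) ≠ 0 := Nat.cast_ne_zero.2 hn.ne'
      have hnpos : (0:ℝ) < n := Nat.cast_pos.2 hn
      set t : ℕ → ℝ := fun i => θlow + i * ((θ - θlow)/n) with htdef
      have hδn : (0:ℝ) ≤ (θ - θlow)/n := div_nonneg hδ hnpos.le
      have ht_mem : ∀ i : ℕ, i ≤ n → t i ∈ Set.Icc θlow θhigh := by
        intro i hi
        have h0 : (0:ℝ) ≤ (i:ℝ) * ((θ - θlow)/n) := mul_nonneg (Nat.cast_nonneg i) hδn
        have h1 : (i:ℝ) * ((θ - θlow)/n) ≤ (n:ℝ) * ((θ - θlow)/n) :=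
          mul_le_mul_of_nonneg_right (Nat.cast_le.2 hi) hδn
        have h2 : (n:ℝ) * ((θ - θlow)/n) = θ - θlow := by field_simp
        rw [htdef]
        exact ⟨by simp only []; linarith, by simp only []; linarith [hθm.2]⟩
      have ht_succ : ∀ i : ℕ, t (i+1) - t i = (θ - θlow)/n := by
        intro i; rw [htdef]; push_cast; ring
      have ht_mono : ∀ i : ℕ, t i ≤ t (i+1) := by
        intro i
        have h : 0 ≤ t (i+1) - t i := by rw [ht_succ i]; exact hδn
        exact sub_nonneg.1 h
      have htn : t n = θ := by rw [htdef]; field_simp; ring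
      have ht0 : t 0 = θlow := by rw [htdef]; simp
      set Φ : ℕ → ℝ := fun i => ((-(p (t i)))
          - ∫ l in (0:ℝ)..Lbar, (1 - g (t i) (F (t i) l)) * r (t i) l)
          - (∫ s in θlow..(t i), ∫ l in (0:ℝ)..Lbar, D s l * r s l) with hΦdef
      have hterm : ∀ i ∈ Finset.range n, |Φ (i+1) - Φ i|
          ≤ ((θ - θlow)/n) * ((C:ℝ) * ((∫ l in (0:ℝ)..Lbar, r (t i) l)
            - (∫ l in (0:ℝ)..Lbar, r (t (i+1)) l))) := by
        intro i hi
        have hi' := Finset.mem_range.1 hi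
        have h1 := hstep (t i) (ht_mem i hi'.le) (t (i+1)) (ht_mem (i+1) hi') (ht_mono i)
        rw [ht_succ i] at h1
        exact h1
      have hbig : |Φ n - Φ 0| ≤ ((θ - θlow) * ((C:ℝ) * Lbar)) / n := by
        calc |Φ n - Φ 0| = |∑ i ∈ Finset.range n, (Φ (i+1) - Φ i)| := by
              rw [Finset.sum_range_sub]
          _ ≤ ∑ i ∈ Finset.range n, |Φ (i+1) - Φ i| := Finset.abs_sum_le_sum_abs _ _
          _ ≤ ∑ i ∈ Finset.range n, ((θ - θlow)/n) * ((C:ℝ)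
              * ((∫ l in (0:ℝ)..Lbar, r (t i) l) - (∫ l in (0:ℝ)..Lbar, r (t (i+1)) l))) :=
            Finset.sum_le_sum hterm
          _ = ((θ - θlow)/n) * ((C:ℝ)
              * ((∫ l in (0:ℝ)..Lbar, r (t 0) l) - (∫ l in (0:ℝ)..Lbar, r (t n) l))) := by
            rw [← Finset.mul_sum, ← Finset.mul_sum,
              Finset.sum_range_sub' (fun i => ∫ l in (0:ℝ)..Lbar, r (t i) l) n]
          _ ≤ ((θ - θlow)/n) * ((C:ℝ) * Lbar) := by
            apply mul_le_mul_of_nonneg_left _ hδn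
            apply mul_le_mul_of_nonneg_left _ C.coe_nonneg
            have := hR_le (t 0) (ht_mem 0 (Nat.zero_le n))
            have := hR_nonneg (t n) (ht_mem n (le_refl n))
            linarith
          _ = ((θ - θlow) * ((C:ℝ) * Lbar)) / n := by ring
      have hΦn : Φ n = ((-(p θ)) - ∫ l in (0:ℝ)..Lbar, (1 - g θ (F θ l)) * r θ l)
          - (∫ s in θlow..θ, ∫ l in (0:ℝ)..Lbar, D s l * r s l) := by
        rw [hΦdef]; simp only []; rw [htn]
      have hΦ0 : Φ 0 = ((-(p θlow)) - ∫ l in (0:ℝ)..Lbar, (1 - g θlow (F θlow l)) * r θlow l)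
          - (∫ s in θlow..θlow, ∫ l in (0:ℝ)..Lbar, D s l * r s l) := by
        rw [hΦdef]; simp only []; rw [ht0]
      rw [hΦn, hΦ0] at hbig
      exact hbig
    -- conclude the expression is zero
    have hsame : (∫ s in θlow..θlow, ∫ l in (0:ℝ)..Lbar, D s l * r s l) = 0 :=
      intervalIntegral.integral_same
    have hM : 0 ≤ (θ - θlow) * ((C:ℝ) * Lbar) :=
      mul_nonneg hδ (mul_nonneg C.coe_nonneg hL')
    have hE0 : (((-(p θ)) - ∫ l in (0:ℝ)..Lbar, (1 - g θ (F θ l)) * r θ l)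
        - (∫ s in θlow..θ, ∫ l in (0:ℝ)..Lbar, D s l * r s l))
      - (((-(p θlow)) - ∫ l in (0:ℝ)..Lbar, (1 - g θlow (F θlow l)) * r θlow l)
        - (∫ s in θlow..θlow, ∫ l in (0:ℝ)..Lbar, D s l * r s l)) = 0 :=
      aux_squeeze hM hmain
    linarith [hE0, hsame]
  · -- premium formula implies IC
    intro hform θ hθm θ' hθ'm
    have e1 := hform θ hθm
    have e2 := hform θ' hθ'm
    simp only [Uag]
    rcases le_total θ' θ with hle | hle
    · have k := hkey θ' hθ'm θ hθm hle θ' hθ'm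
      have w := (hW θ' hθ'm θ hθm hle).1
      have hd : (∫ s in θlow..θ, ∫ l in (0:ℝ)..Lbar, D s l * r s l)
          - (∫ s in θlow..θ', ∫ l in (0:ℝ)..Lbar, D s l * r s l)
          = ∫ s in θ'..θ, ∫ l in (0:ℝ)..Lbar, D s l * r s l :=
        intervalIntegral.integral_interval_sub_left (hint_h θlow hθl θ hθm hθm.1)
          (hint_h θlow hθl θ' hθ'm hθ'm.1)
      linarith
    · have k := hkey θ hθm θ' hθ'm hle θ' hθ'm
      have w := (hW θ hθm θ' hθ'm hle).2
      have hd : (∫ s in θlow..θ', ∫ l in (0:ℝ)..Lbar, D s l * r s l)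
          - (∫ s in θlow..θ, ∫ l in (0:ℝ)..Lbar, D s l * r s l)
          = ∫ s in θ..θ', ∫ l in (0:ℝ)..Lbar, D s l * r s l :=
        intervalIntegral.integral_interval_sub_left (hint_h θlow hθl θ' hθ'm hθ'm.1)
          (hint_h θlow hθl θ hθm hθm.1)
      linarith
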